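/- Let g_1, …, g_s be polynomials in n real variables and let Ω = {x ∈ ℝ^n : g_1(x) ≥ 0, …, g_s(x) ≥ 0}. Assume the quadratic module generated by g_1, …, g_s is Archimedean, i.e., there exist N ∈ ℕ and sum-of-squares polynomials σ_0, σ_1, …, σ_s such that N − (x_1² + … + x_n²) = σ_0(x) + σ_1(x)g_1(x) + … + σ_s(x)g_s(x). If a polynomial p satisfies p(x) > 0 for all x ∈ Ω, then there exist sum-of-squares polynomials s_0, s_1, …, s_s such that p(x) = s_0(x) + s_1(x)g_1(x) + … + s_s(x)g_s(x). -/

import Mathlib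

open MvPolynomial

/-- A polynomial in `n` real variables is a sum of squares if it is a finite sum of
squares of polynomials. -/
def IsSOS {n : ℕ} (p : MvPolynomial (Fin n) ℝ) : Prop :=
  ∃ (r : ℕ) (q : Fin r → MvPolynomial (Fin n) ℝ), p = ∑ i, (q i) ^ 2

namespace PutinarAux

variable {n : ℕ}

lemma isSOS_iff_isSumSq (p : MvPolynomial (Fin n) ℝ) : IsSOS p ↔ IsSumSq p := by
  constructor
  · rintro ⟨r, q, rfl⟩
    simpa only [sq] using IsSumSq.sum_mul_self Finset.univ q
  · intro h
    induction h with
    | zero => exact ⟨0, ![], by simp⟩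
    | @sq_add a S _ ih =>
      obtain ⟨r, q, rfl⟩ := ih
      exact ⟨r + 1, Fin.cons a q, by simp [Fin.sum_univ_succ, sq]⟩

lemma sq_mul_sumsq {c b : MvPolynomial (Fin n) ℝ} (hb : IsSumSq b) :
    IsSumSq (c * c * b) := by
  induction hb with
  | zero => simpa using IsSumSq.zero
  | @sq_add d T _ ih2 =>
    have : c * c * (d * d + T) = (c * d) * (c * d) + c * c * T := by ring
    rw [this]
    exact IsSumSq.sq_add _ ih2

lemma IsSumSq.mul_sumsq {a b : MvPolynomial (Fin n) ℝ} (ha : IsSumSq a) (hb : IsSumSq b) :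
    IsSumSq (a * b) := by
  induction ha with
  | zero => simpa using IsSumSq.zero
  | @sq_add c S _ ih =>
    have : (c * c + S) * b = c * c * b + S * b := by ring
    rw [this]
    exact (sq_mul_sumsq hb).add ih

/-- A quadratic module. -/
def IsQM (T : Set (MvPolynomial (Fin n) ℝ)) : Prop :=
  (0 : MvPolynomial (Fin n) ℝ) ∈ T ∧ (1 : MvPolynomial (Fin n) ℝ) ∈ T ∧
    (∀ a ∈ T, ∀ b ∈ T, a + b ∈ T) ∧
    (∀ q : MvPolynomial (Fin n) ℝ, ∀ a ∈ T, q ^ 2 * a ∈ T)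

namespace IsQM

variable {T : Set (MvPolynomial (Fin n) ℝ)} (hT : IsQM T)
include hT

lemma zero_mem : (0 : MvPolynomial (Fin n) ℝ) ∈ T := hT.1
lemma one_mem : (1 : MvPolynomial (Fin n) ℝ) ∈ T := hT.2.1
lemma add_mem {a b : MvPolynomial (Fin n) ℝ} (ha : a ∈ T) (hb : b ∈ T) : a + b ∈ T :=
  hT.2.2.1 a ha b hb
lemma sq_mul_mem (q : MvPolynomial (Fin n) ℝ) {a : MvPolynomial (Fin n) ℝ} (ha : a ∈ T) :
    q ^ 2 * a ∈ T := hT.2.2.2 q a ha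

lemma sumsq_mul_mem {s a : MvPolynomial (Fin n) ℝ} (hs : IsSumSq s) (ha : a ∈ T) :
    s * a ∈ T := by
  induction hs with
  | zero => simpa using hT.zero_mem
  | @sq_add c S _ ih =>
    have : (c * c + S) * a = c ^ 2 * a + S * a := by ring
    rw [this]
    exact hT.add_mem (hT.sq_mul_mem c ha) ih

lemma sumsq_mem {s : MvPolynomial (Fin n) ℝ} (hs : IsSumSq s) : s ∈ T := by
  simpa using hT.sumsq_mul_mem hs hT.one_mem

lemma sq_mem (q : MvPolynomial (Fin n) ℝ) : q ^ 2 ∈ T := by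
  simpa using hT.sq_mul_mem q hT.one_mem

lemma const_mul_mem {r : ℝ} (hr : 0 ≤ r) {a : MvPolynomial (Fin n) ℝ} (ha : a ∈ T) :
    C r * a ∈ T := by
  have : C r * a = (C (Real.sqrt r)) ^ 2 * a := by
    rw [← map_pow, Real.sq_sqrt hr]
  rw [this]; exact hT.sq_mul_mem _ ha

lemma const_mem {r : ℝ} (hr : 0 ≤ r) : (C r : MvPolynomial (Fin n) ℝ) ∈ T := by
  simpa using hT.const_mul_mem hr hT.one_mem

lemma sum_mem {ι : Type*} (s : Finset ι) (f : ι → MvPolynomial (Fin n) ℝ)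
    (hf : ∀ i ∈ s, f i ∈ T) : ∑ i ∈ s, f i ∈ T := by
  induction s using Finset.cons_induction with
  | empty => simpa using hT.zero_mem
  | cons i s his ih =>
    rw [Finset.sum_cons]
    exact hT.add_mem (hf i (Finset.mem_cons_self i s)) (ih fun j hj => hf j (Finset.mem_cons_of_mem hj))

lemma sq_bound {a : MvPolynomial (Fin n) ℝ} {d : ℝ} (hd : 0 < d)
    (h1 : C d - a ∈ T) (h2 : C d + a ∈ T) : C (d ^ 2) - a ^ 2 ∈ T := by
  have hmem : C (2 * d) * (C (d ^ 2) - a ^ 2) ∈ T := by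
    have key : (C (2 * d) : MvPolynomial (Fin n) ℝ) * (C (d ^ 2) - a ^ 2) =
        (C d + a) ^ 2 * (C d - a) + (C d - a) ^ 2 * (C d + a) := by
      rw [map_mul, map_pow, show (C (2 : ℝ) : MvPolynomial (Fin n) ℝ) = 2 from map_ofNat _ 2]
      ring
    rw [key]
    exact hT.add_mem (hT.sq_mul_mem _ h1) (hT.sq_mul_mem _ h2)
  have heq : C (d ^ 2) - a ^ 2 = C (1 / (2 * d)) * (C (2 * d) * (C (d ^ 2) - a ^ 2)) := by
    rw [← mul_assoc, ← map_mul, show 1 / (2 * d) * (2 * d) = 1 by field_simp, map_one, one_mul]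
  rw [heq]
  exact hT.const_mul_mem (by positivity) hmem

end IsQM

/-- The set of elements bounded with respect to `T`. -/
def Bd (T : Set (MvPolynomial (Fin n) ℝ)) : Set (MvPolynomial (Fin n) ℝ) :=
  {a | ∃ k : ℝ, 0 ≤ k ∧ C k - a ∈ T ∧ C k + a ∈ T}

variable {T : Set (MvPolynomial (Fin n) ℝ)}

lemma chalf : (C (1/2 : ℝ) : MvPolynomial (Fin n) ℝ) * 2 = 1 := by
  rw [show (2 : MvPolynomial (Fin n) ℝ) = C 2 from (map_ofNat _ 2).symm, ← map_mul]
  norm_num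

lemma cquarter : (C (1/4 : ℝ) : MvPolynomial (Fin n) ℝ) * 4 = 1 := by
  rw [show (4 : MvPolynomial (Fin n) ℝ) = C 4 from (map_ofNat _ 4).symm, ← map_mul]
  norm_num

lemma bd_const (hT : IsQM T) (r : ℝ) : (C r : MvPolynomial (Fin n) ℝ) ∈ Bd T := by
  refine ⟨|r|, abs_nonneg r, ?_, ?_⟩
  · rw [← map_sub]; exact hT.const_mem (by nlinarith [le_abs_self r])
  · rw [← map_add]; exact hT.const_mem (by nlinarith [neg_abs_le r])

lemma bd_add (hT : IsQM T) {a b : MvPolynomial (Fin n) ℝ} (ha : a ∈ Bd T) (hb : b ∈ Bd T) :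
    a + b ∈ Bd T := by
  obtain ⟨k, hk, h1, h2⟩ := ha
  obtain ⟨l, hl, h3, h4⟩ := hb
  refine ⟨k + l, by linarith, ?_, ?_⟩
  · have : (C (k + l) : MvPolynomial (Fin n) ℝ) - (a + b) = (C k - a) + (C l - b) := by
      rw [map_add]; ring
    rw [this]; exact hT.add_mem h1 h3
  · have : (C (k + l) : MvPolynomial (Fin n) ℝ) + (a + b) = (C k + a) + (C l + b) := by
      rw [map_add]; ring
    rw [this]; exact hT.add_mem h2 h4

lemma bd_neg (hT : IsQM T) {a : MvPolynomial (Fin n) ℝ} (ha : a ∈ Bd T) : -a ∈ Bd T := by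
  obtain ⟨k, hk, h1, h2⟩ := ha
  refine ⟨k, hk, ?_, ?_⟩
  · have : (C k : MvPolynomial (Fin n) ℝ) - -a = C k + a := by ring
    rw [this]; exact h2
  · have : (C k : MvPolynomial (Fin n) ℝ) + -a = C k - a := by ring
    rw [this]; exact h1

lemma bd_cmul (hT : IsQM T) {r : ℝ} (hr : 0 ≤ r) {a : MvPolynomial (Fin n) ℝ}
    (ha : a ∈ Bd T) : C r * a ∈ Bd T := by
  obtain ⟨k, hk, h1, h2⟩ := ha
  refine ⟨r * k, mul_nonneg hr hk, ?_, ?_⟩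
  · have : (C (r * k) : MvPolynomial (Fin n) ℝ) - C r * a = C r * (C k - a) := by
      rw [map_mul]; ring
    rw [this]; exact hT.const_mul_mem hr h1
  · have : (C (r * k) : MvPolynomial (Fin n) ℝ) + C r * a = C r * (C k + a) := by
      rw [map_mul]; ring
    rw [this]; exact hT.const_mul_mem hr h2

lemma bd_of_sq_bound (hT : IsQM T) {a : MvPolynomial (Fin n) ℝ} {K : ℝ} (hK : 0 ≤ K)
    (h : C K - a ^ 2 ∈ T) : a ∈ Bd T := by
  refine ⟨(K + 1) / 2, by linarith, ?_, ?_⟩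
  · have key : (C ((K + 1) / 2) : MvPolynomial (Fin n) ℝ) - a =
        C (1 / 2) * ((a - 1) ^ 2 + (C K - a ^ 2)) := by
      rw [show (K + 1) / 2 = 1 / 2 * (K + 1) by ring, map_mul, map_add, map_one]
      linear_combination a * (chalf (n := n))
    rw [key]
    exact hT.const_mul_mem (by norm_num) (hT.add_mem (hT.sq_mem _) h)
  · have key : (C ((K + 1) / 2) : MvPolynomial (Fin n) ℝ) + a =
        C (1 / 2) * ((a + 1) ^ 2 + (C K - a ^ 2)) := by
      rw [show (K + 1) / 2 = 1 / 2 * (K + 1) by ring, map_mul, map_add, map_one]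
      linear_combination (-a) * (chalf (n := n))
    rw [key]
    exact hT.const_mul_mem (by norm_num) (hT.add_mem (hT.sq_mem _) h)

lemma bd_sq (hT : IsQM T) {a : MvPolynomial (Fin n) ℝ} (ha : a ∈ Bd T) : a ^ 2 ∈ Bd T := by
  obtain ⟨k, hk, h1, h2⟩ := ha
  have hd : (0:ℝ) < k + 1 := by linarith
  have h1' : (C (k + 1) : MvPolynomial (Fin n) ℝ) - a ∈ T := by
    have : (C (k + 1) : MvPolynomial (Fin n) ℝ) - a = (C k - a) + 1 := by
      rw [map_add, map_one]; ring
    rw [this]; exact hT.add_mem h1 hT.one_mem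
  have h2' : (C (k + 1) : MvPolynomial (Fin n) ℝ) + a ∈ T := by
    have : (C (k + 1) : MvPolynomial (Fin n) ℝ) + a = (C k + a) + 1 := by
      rw [map_add, map_one]; ring
    rw [this]; exact hT.add_mem h2 hT.one_mem
  exact ⟨(k + 1) ^ 2, by positivity, hT.sq_bound hd h1' h2',
    hT.add_mem (hT.const_mem (by positivity)) (hT.sq_mem a)⟩

lemma bd_mul (hT : IsQM T) {a b : MvPolynomial (Fin n) ℝ} (ha : a ∈ Bd T) (hb : b ∈ Bd T) :
    a * b ∈ Bd T := by
  have h1 : C (1/4 : ℝ) * (a + b) ^ 2 ∈ Bd T :=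
    bd_cmul hT (by norm_num) (bd_sq hT (bd_add hT ha hb))
  have h2 : -(C (1/4 : ℝ) * (a - b) ^ 2) ∈ Bd T := by
    have : a - b = a + -b := by ring
    exact bd_neg hT (bd_cmul hT (by norm_num) (bd_sq hT (this ▸ bd_add hT ha (bd_neg hT hb))))
  have key : a * b = C (1/4 : ℝ) * (a + b) ^ 2 + -(C (1/4 : ℝ) * (a - b) ^ 2) := by
    linear_combination (-(a * b)) * (cquarter (n := n))
  rw [key]
  exact bd_add hT h1 h2

lemma bd_univ {T : Set (MvPolynomial (Fin n) ℝ)} (hT : IsQM T) {N : ℝ} (hN0 : 0 ≤ N)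
    (hN : C N - ∑ i, (X i : MvPolynomial (Fin n) ℝ) ^ 2 ∈ T) (a : MvPolynomial (Fin n) ℝ) :
    a ∈ Bd T := by
  have hX : ∀ i : Fin n, (X i : MvPolynomial (Fin n) ℝ) ∈ Bd T := by
    intro i
    refine bd_of_sq_bound hT hN0 ?_
    have : (C N : MvPolynomial (Fin n) ℝ) - (X i) ^ 2 =
        (C N - ∑ j, (X j) ^ 2) + ∑ j ∈ Finset.univ.erase i, (X j) ^ 2 := by
      rw [Finset.sum_erase_eq_sub (Finset.mem_univ i)]; ring
    rw [this]
    exact hT.add_mem hN (hT.sum_mem _ _ fun j _ => hT.sq_mem _)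
  induction a using MvPolynomial.induction_on with
  | C r => exact bd_const hT r
  | add p q hp hq => exact bd_add hT hp hq
  | mul_X p i hp => exact bd_mul hT hp (hX i)

lemma eval_sumsq_nonneg {s : MvPolynomial (Fin n) ℝ} (hs : IsSumSq s) (x : Fin n → ℝ) :
    0 ≤ eval x s := by
  induction hs with
  | zero => simp
  | @sq_add a S _ ih =>
    rw [map_add, map_mul]
    nlinarith [mul_self_nonneg (eval x a)]

lemma continuous_eval' (q : MvPolynomial (Fin n) ℝ) :
    Continuous fun x : Fin n → ℝ => eval x q := by
  induction q using MvPolynomial.induction_on with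
  | C r => simpa using continuous_const
  | add p q hp hq => simp only [map_add]; exact hp.add hq
  | mul_X p i hp => simp only [map_mul, eval_X]; exact hp.mul (continuous_apply i)

lemma mem_of_nonpos_shift {T : Set (MvPolynomial (Fin n) ℝ)} (hT : IsQM T)
    {c : MvPolynomial (Fin n) ℝ} {m : ℝ} (hm : m ≤ 0) (h : c + C m ∈ T) : c ∈ T := by
  have : c = (c + C m) + C (-m) := by rw [map_neg]; ring
  rw [this]
  exact hT.add_mem h (hT.const_mem (by linarith))

lemma key_lemma {T : Set (MvPolynomial (Fin n) ℝ)} (hT : IsQM T)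
    (harch : ∀ a, a ∈ Bd T) {σ c : MvPolynomial (Fin n) ℝ} (hσ : IsSumSq σ)
    (hu : σ * c - 1 ∈ T) : c ∈ T := by
  obtain ⟨k, hk0, hk, -⟩ := harch σ
  obtain ⟨K3, hK30, hK3, -⟩ := harch (σ ^ 2)
  obtain ⟨K4, hK40, hK4, -⟩ := harch (σ * (σ * c - 1))
  obtain ⟨m0, hm00, -, hm0⟩ := harch c
  set C0 : ℝ := m0 * K3 + k + K4 + 1 with hC0def
  have hC0 : 0 < C0 := by nlinarith [mul_nonneg hm00 hK30]
  set lam : ℝ := 1 / C0 with hlamdef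
  have hlam : 0 < lam := by positivity
  -- one descent step
  have stepB : ∀ m : ℝ, 0 ≤ m → m ≤ m0 → c + C m ∈ T → c + C (m - lam) ∈ T := by
    intro m hm0' hmm0 hmem
    set m' : ℝ := m + m * lam ^ 2 * K3 - 2 * lam + lam ^ 2 * (k + K4) with hm'def
    have hmem' : c + C m' ∈ T := by
      have key : c + C m' =
          (1 - C lam * σ) ^ 2 * (c + C m)
          + C m * (C lam * σ * 2 + C lam ^ 2 * (C K3 - σ ^ 2))
          + C lam * (σ * c - 1) * 2
          + C lam ^ 2 * (C k - σ)
          + C lam ^ 2 * (C K4 - σ * (σ * c - 1)) := by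
        rw [hm'def]
        simp only [map_add, map_sub, map_mul, map_pow, map_ofNat, map_one]
        ring
      rw [key]
      refine hT.add_mem (hT.add_mem (hT.add_mem (hT.add_mem ?_ ?_) ?_) ?_) ?_
      · exact hT.sq_mul_mem _ hmem
      · refine hT.const_mul_mem hm0' (hT.add_mem ?_ ?_)
        · have : (C lam : MvPolynomial (Fin n) ℝ) * σ * 2 = C (2 * lam) * σ := by
            rw [map_mul, map_ofNat]; ring
          rw [this]
          exact hT.const_mul_mem (by linarith) (hT.sumsq_mem hσ)
        · have : (C lam : MvPolynomial (Fin n) ℝ) ^ 2 * (C K3 - σ ^ 2)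
              = C (lam ^ 2) * (C K3 - σ ^ 2) := by rw [map_pow]
          rw [this]
          exact hT.const_mul_mem (by positivity) hK3
      · have : (C lam : MvPolynomial (Fin n) ℝ) * (σ * c - 1) * 2
            = C (2 * lam) * (σ * c - 1) := by rw [map_mul, map_ofNat]; ring
        rw [this]
        exact hT.const_mul_mem (by linarith) hu
      · rw [show (C lam : MvPolynomial (Fin n) ℝ) ^ 2 = C (lam ^ 2) from (map_pow _ _ _).symm]
        exact hT.const_mul_mem (by positivity) hk
      · rw [show (C lam : MvPolynomial (Fin n) ℝ) ^ 2 = C (lam ^ 2) from (map_pow _ _ _).symm]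
        exact hT.const_mul_mem (by positivity) hK4
    have hge : m - lam - m' ≥ 0 := by
      have h1 : m * K3 + k + K4 ≤ C0 := by nlinarith
      have h2 : lam ^ 2 * (m * K3 + k + K4) ≤ lam ^ 2 * C0 := by nlinarith
      have h3 : lam ^ 2 * C0 = lam := by
        rw [hlamdef]; field_simp
      have : m - lam - m' = lam - lam ^ 2 * (m * K3 + k + K4) := by
        rw [hm'def]; ring
      rw [this]; linarith
    have : c + C (m - lam) = (c + C m') + C (m - lam - m') := by
      rw [show m - lam = m' + (m - lam - m') by ring, map_add]; ring
    rw [this]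
    exact hT.add_mem hmem' (hT.const_mem hge)
  -- descent
  have descent : ∀ j : ℕ, c ∈ T ∨ (0 ≤ m0 - j * lam ∧ c + C (m0 - j * lam) ∈ T) := by
    intro j
    induction j with
    | zero =>
      by_cases h : 0 ≤ m0
      · right
        refine ⟨by simpa using h, ?_⟩
        simpa [add_comm] using hm0
      · exact Or.inl (mem_of_nonpos_shift hT (m := m0) (by linarith [not_le.mp h])
          (by simpa [add_comm] using hm0))
    | succ j ih =>
      rcases ih with h | ⟨h0, hmem⟩
      · exact Or.inl h
      · have hle : m0 - j * lam ≤ m0 := by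
          have : (0:ℝ) ≤ j * lam := by positivity
          linarith
        have step := stepB _ h0 hle hmem
        have heq : m0 - j * lam - lam = m0 - (j + 1 : ℕ) * lam := by push_cast; ring
        rw [heq] at step
        by_cases h' : 0 ≤ m0 - (j + 1 : ℕ) * lam
        · exact Or.inr ⟨h', step⟩
        · exact Or.inl (mem_of_nonpos_shift hT (by linarith) step)
  obtain ⟨j, hj⟩ := exists_nat_gt (m0 / lam)
  rcases descent j with h | ⟨h0, -⟩
  · exact h
  · exfalso
    have : m0 / lam < j := hj
    have : m0 < j * lam := by
      rw [div_lt_iff₀ hlam] at this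
      linarith
    linarith

/-- Extension of a quadratic module by one element. -/
def qmExt (Q : Set (MvPolynomial (Fin n) ℝ)) (b : MvPolynomial (Fin n) ℝ) :
    Set (MvPolynomial (Fin n) ℝ) :=
  {a | ∃ q s, q ∈ Q ∧ IsSumSq s ∧ a = q + b * s}

lemma qmExt_isQM {Q : Set (MvPolynomial (Fin n) ℝ)} (hQ : IsQM Q)
    (b : MvPolynomial (Fin n) ℝ) : IsQM (qmExt Q b) := by
  refine ⟨⟨0, 0, hQ.zero_mem, IsSumSq.zero, by simp⟩,
    ⟨1, 0, hQ.one_mem, IsSumSq.zero, by simp⟩, ?_, ?_⟩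
  · rintro a ⟨q, u, hq, hu, rfl⟩ a' ⟨q', u', hq', hu', rfl⟩
    exact ⟨q + q', u + u', hQ.add_mem hq hq', hu.add hu', by ring⟩
  · rintro w a ⟨q, u, hq, hu, rfl⟩
    refine ⟨w ^ 2 * q, w ^ 2 * u, hQ.sq_mul_mem w hq, ?_, by ring⟩
    have : w ^ 2 * u = w * w * u := by ring
    rw [this]
    exact sq_mul_sumsq hu

lemma subset_qmExt {Q : Set (MvPolynomial (Fin n) ℝ)} (b : MvPolynomial (Fin n) ℝ) :
    Q ⊆ qmExt Q b := fun a ha => ⟨a, 0, ha, IsSumSq.zero, by simp⟩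

lemma mem_qmExt_self {Q : Set (MvPolynomial (Fin n) ℝ)} (hQ : IsQM Q)
    (b : MvPolynomial (Fin n) ℝ) : b ∈ qmExt Q b := by
  refine ⟨0, 1, hQ.zero_mem, ?_, by simp⟩
  have : (1 : MvPolynomial (Fin n) ℝ) = 1 * 1 + 0 := by ring
  rw [this]
  exact IsSumSq.sq_add 1 IsSumSq.zero

/-- Totality of a maximal proper quadratic module. -/
lemma total_of_maximal {Q : Set (MvPolynomial (Fin n) ℝ)} (hQ : IsQM Q)
    (hproper : C (-1) ∉ Q)
    (hmax : ∀ b, b ∉ Q → C (-1) ∈ qmExt Q b) :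
    ∀ b, b ∈ Q ∨ -b ∈ Q := by
  intro b
  by_contra hcon
  push_neg at hcon
  obtain ⟨hb, hnb⟩ := hcon
  obtain ⟨m, u, hm, hu, he⟩ := hmax b hb
  obtain ⟨m', t, hm', ht, he'⟩ := hmax (-b) hnb
  have hC1 : (C (-1) : MvPolynomial (Fin n) ℝ) = -1 := by simp
  rw [hC1] at he he'
  have hw : t * m + u * m' ∈ Q := hQ.add_mem (hQ.sumsq_mul_mem ht hm) (hQ.sumsq_mul_mem hu hm')
  have hnu : -u ∈ Q := by
    have : -u = (t * m + u * m') + t := by linear_combination t * he + u * he'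
    rw [this]
    exact hQ.add_mem hw (hQ.sumsq_mem ht)
  have hbu : b * u ∈ Q := by
    have h1' : (b + 1) ^ 2 * u ∈ Q := hQ.sq_mul_mem _ (hQ.sumsq_mem hu)
    have h2' : (b - 1) ^ 2 * -u ∈ Q := hQ.sq_mul_mem _ hnu
    have key : b * u = C (1/4 : ℝ) * ((b + 1) ^ 2 * u + (b - 1) ^ 2 * -u) := by
      linear_combination (-(b * u)) * (cquarter (n := n))
    rw [key]
    exact hQ.const_mul_mem (by norm_num) (hQ.add_mem h1' h2')
  apply hproper
  rw [hC1, he]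
  exact hQ.add_mem hm hbu

/-- A "good" quadratic module: proper, total, Archimedean. -/
structure GoodQM (Q : Set (MvPolynomial (Fin n) ℝ)) : Prop where
  qm : IsQM Q
  proper : C (-1) ∉ Q
  total : ∀ b, b ∈ Q ∨ -b ∈ Q
  arch : ∀ a, a ∈ Bd Q

namespace GoodQM

variable {Q : Set (MvPolynomial (Fin n) ℝ)} (h : GoodQM Q)
include h

lemma const_mem_iff {r : ℝ} : (C r : MvPolynomial (Fin n) ℝ) ∈ Q ↔ 0 ≤ r := by
  constructor
  · intro hr
    by_contra hneg
    push_neg at hneg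
    apply h.proper
    have hr0 : r ≠ 0 := ne_of_lt hneg
    have : (C (-1) : MvPolynomial (Fin n) ℝ) = C (1 / (-r)) * C r := by
      rw [← map_mul]
      congr 1
      field_simp
    rw [this]
    exact h.qm.const_mul_mem (one_div_nonneg.mpr (by linarith)) hr
  · exact fun hr => h.qm.const_mem hr

end GoodQM

/-- The character associated to a good quadratic module. -/
noncomputable def phi (Q : Set (MvPolynomial (Fin n) ℝ)) (a : MvPolynomial (Fin n) ℝ) : ℝ :=
  sInf {r : ℝ | C r - a ∈ Q}

namespace GoodQM

variable {Q : Set (MvPolynomial (Fin n) ℝ)} (h : GoodQM Q)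
include h

lemma sa_nonempty (a : MvPolynomial (Fin n) ℝ) : {r : ℝ | C r - a ∈ Q}.Nonempty := by
  obtain ⟨k, -, hk, -⟩ := h.arch a
  exact ⟨k, hk⟩

lemma sa_bddBelow (a : MvPolynomial (Fin n) ℝ) : BddBelow {r : ℝ | C r - a ∈ Q} := by
  obtain ⟨k, -, -, hk⟩ := h.arch a
  refine ⟨-k, fun r hr => ?_⟩
  have : (C (r + k) : MvPolynomial (Fin n) ℝ) ∈ Q := by
    rw [map_add]
    have : (C r : MvPolynomial (Fin n) ℝ) + C k = (C r - a) + (C k + a) := by ring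
    rw [this]
    exact h.qm.add_mem hr hk
  have := h.const_mem_iff.mp this
  linarith

lemma phi_le {a : MvPolynomial (Fin n) ℝ} {r : ℝ} (hr : C r - a ∈ Q) : phi Q a ≤ r :=
  csInf_le (h.sa_bddBelow a) hr

lemma mem_of_lt {a : MvPolynomial (Fin n) ℝ} {r : ℝ} (hr : phi Q a < r) : C r - a ∈ Q := by
  obtain ⟨r', hr', hlt⟩ := exists_lt_of_csInf_lt (h.sa_nonempty a) hr
  have : (C r : MvPolynomial (Fin n) ℝ) - a = (C r' - a) + C (r - r') := by
    rw [map_sub]; ring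
  rw [this]
  exact h.qm.add_mem hr' (h.qm.const_mem (by linarith))

lemma neg_mem_of_lt {a : MvPolynomial (Fin n) ℝ} {r : ℝ} (hr : r < phi Q a) :
    a - C r ∈ Q := by
  have hnot : C r - a ∉ Q := fun hmem => absurd (h.phi_le hmem) (not_le.2 hr)
  rcases h.total (C r - a) with hc | hc
  · exact absurd hc hnot
  · rwa [neg_sub] at hc

lemma phi_nonneg {a : MvPolynomial (Fin n) ℝ} (ha : a ∈ Q) : 0 ≤ phi Q a := by
  refine le_csInf (h.sa_nonempty a) fun r hr => ?_
  have : (C r : MvPolynomial (Fin n) ℝ) ∈ Q := by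
    have : (C r : MvPolynomial (Fin n) ℝ) = (C r - a) + a := by ring
    rw [this]
    exact h.qm.add_mem hr ha
  exact h.const_mem_iff.mp this

lemma phi_add (a b : MvPolynomial (Fin n) ℝ) : phi Q (a + b) = phi Q a + phi Q b := by
  refine le_antisymm ?_ ?_
  · refine le_of_forall_pos_le_add fun ε hε => ?_
    have h1 : C (phi Q a + ε / 2) - a ∈ Q := h.mem_of_lt (by linarith)
    have h2 : C (phi Q b + ε / 2) - b ∈ Q := h.mem_of_lt (by linarith)
    refine h.phi_le (r := phi Q a + phi Q b + ε) ?_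
    have : (C (phi Q a + phi Q b + ε) : MvPolynomial (Fin n) ℝ) - (a + b) =
        (C (phi Q a + ε / 2) - a) + (C (phi Q b + ε / 2) - b) := by
      rw [show phi Q a + phi Q b + ε = (phi Q a + ε / 2) + (phi Q b + ε / 2) by ring, map_add]
      ring
    rw [this]
    exact h.qm.add_mem h1 h2
  · by_contra hcon
    push_neg at hcon
    set gap := phi Q a + phi Q b - phi Q (a + b) with hgap
    have hgap0 : 0 < gap := by simp only [hgap]; linarith
    have h1 : C (phi Q (a + b) + gap / 4) - (a + b) ∈ Q := h.mem_of_lt (by linarith)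
    have h2 : a - C (phi Q a - gap / 4) ∈ Q := h.neg_mem_of_lt (by linarith)
    have h3 : b - C (phi Q b - gap / 4) ∈ Q := h.neg_mem_of_lt (by linarith)
    have hsum : (C (phi Q (a + b) + gap / 4 - (phi Q a - gap / 4) - (phi Q b - gap / 4)) :
        MvPolynomial (Fin n) ℝ) ∈ Q := by
      rw [map_sub, map_sub]
      have : (C (phi Q (a + b) + gap / 4) : MvPolynomial (Fin n) ℝ) - C (phi Q a - gap / 4)
          - C (phi Q b - gap / 4) =
          (C (phi Q (a + b) + gap / 4) - (a + b)) + (a - C (phi Q a - gap / 4))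
          + (b - C (phi Q b - gap / 4)) := by ring
      rw [this]
      exact h.qm.add_mem (h.qm.add_mem h1 h2) h3
    have h4 := h.const_mem_iff.mp hsum
    have h5 : phi Q (a + b) + gap / 4 - (phi Q a - gap / 4) - (phi Q b - gap / 4) = -gap / 4 := by
      rw [hgap]; ring
    rw [h5] at h4
    linarith

lemma phi_zero : phi Q (0 : MvPolynomial (Fin n) ℝ) = 0 := by
  refine le_antisymm (h.phi_le ?_) (h.phi_nonneg h.qm.zero_mem)
  simpa using h.qm.zero_mem

lemma phi_neg (a : MvPolynomial (Fin n) ℝ) : phi Q (-a) = -phi Q a := by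
  have := h.phi_add a (-a)
  simp only [add_neg_cancel] at this
  rw [h.phi_zero] at this
  linarith

lemma phi_const (r : ℝ) : phi Q (C r : MvPolynomial (Fin n) ℝ) = r := by
  refine le_antisymm (h.phi_le (by simpa using h.qm.zero_mem)) ?_
  refine le_csInf (h.sa_nonempty _) fun r' hr' => ?_
  have : (C (r' - r) : MvPolynomial (Fin n) ℝ) ∈ Q := by
    rw [map_sub]; exact hr'
  linarith [h.const_mem_iff.mp this]

lemma phi_cmul {r : ℝ} (hr : 0 ≤ r) (a : MvPolynomial (Fin n) ℝ) :
    phi Q (C r * a) = r * phi Q a := by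
  rcases eq_or_lt_of_le hr with rfl | hrpos
  · simp [map_zero, h.phi_zero]
  refine le_antisymm ?_ ?_
  · refine le_of_forall_pos_le_add fun ε hε => ?_
    have hmem : C (phi Q a + ε / r) - a ∈ Q := h.mem_of_lt (by
      have : 0 < ε / r := by positivity
      linarith)
    have : (C (r * (phi Q a + ε / r)) : MvPolynomial (Fin n) ℝ) - C r * a =
        C r * (C (phi Q a + ε / r) - a) := by rw [map_mul]; ring
    have hle := h.phi_le (r := r * (phi Q a + ε / r)) (by rw [this]; exact h.qm.const_mul_mem hr hmem)
    have heq : r * (phi Q a + ε / r) = r * phi Q a + ε := by field_simp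
    rw [heq] at hle
    exact hle
  · refine le_of_forall_pos_le_add fun ε hε => ?_
    have hmem : a - C (phi Q a - ε / r) ∈ Q := h.neg_mem_of_lt (by
      have : 0 < ε / r := by positivity
      linarith)
    have hlb : r * phi Q a - ε ≤ phi Q (C r * a) := by
      refine le_csInf (h.sa_nonempty _) fun r' hr' => ?_
      have hsum : (C (r' - r * (phi Q a - ε / r)) : MvPolynomial (Fin n) ℝ) ∈ Q := by
        have : (C (r' - r * (phi Q a - ε / r)) : MvPolynomial (Fin n) ℝ) =
            (C r' - C r * a) + C r * (a - C (phi Q a - ε / r)) := by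
          rw [map_sub, map_mul]; ring
        rw [this]
        exact h.qm.add_mem hr' (h.qm.const_mul_mem hr hmem)
      have h4 := h.const_mem_iff.mp hsum
      have h5 : r * (phi Q a - ε / r) = r * phi Q a - ε := by field_simp
      rw [h5] at h4
      linarith
    linarith

lemma phi_cmul' (r : ℝ) (a : MvPolynomial (Fin n) ℝ) :
    phi Q (C r * a) = r * phi Q a := by
  rcases le_or_gt 0 r with hr | hr
  · exact h.phi_cmul hr a
  · have key : (C r : MvPolynomial (Fin n) ℝ) * a = C (-r) * (-a) := by
      rw [map_neg]; ring
    rw [key, h.phi_cmul (by linarith) (-a), h.phi_neg]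
    ring

lemma phi_expand (a : MvPolynomial (Fin n) ℝ) (t : ℝ) :
    phi Q ((a - C t) ^ 2) = phi Q (a ^ 2) - 2 * t * phi Q a + t ^ 2 := by
  have key : (a - C t) ^ 2 = a ^ 2 + C (-(2 * t)) * a + C (t ^ 2) := by
    rw [map_neg, map_mul, map_pow, map_ofNat]
    ring
  rw [key, h.phi_add, h.phi_add, h.phi_cmul', h.phi_const]
  ring

lemma phi_sq (a : MvPolynomial (Fin n) ℝ) : phi Q (a ^ 2) = (phi Q a) ^ 2 := by
  set t := phi Q a with ht
  refine le_antisymm ?_ ?_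
  · -- upper bound
    have hb : phi Q (a - C t) = 0 := by
      rw [sub_eq_add_neg, ← map_neg, h.phi_add, h.phi_const]
      ring
    have hbneg : phi Q (-(a - C t)) = 0 := by rw [h.phi_neg, hb, neg_zero]
    have hle : ∀ d : ℝ, 0 < d → phi Q ((a - C t) ^ 2) ≤ d ^ 2 := by
      intro d hd
      have h1 : C d - (a - C t) ∈ Q := h.mem_of_lt (by rw [hb]; exact hd)
      have h2 : C d + (a - C t) ∈ Q := by
        have := h.mem_of_lt (a := -(a - C t)) (r := d) (by rw [hbneg]; exact hd)
        rwa [sub_neg_eq_add] at this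
      exact h.phi_le (h.qm.sq_bound hd h1 h2)
    have hle0 : phi Q ((a - C t) ^ 2) ≤ 0 := by
      by_contra hcon
      push_neg at hcon
      set w := phi Q ((a - C t) ^ 2) with hw
      have h2 := hle (Real.sqrt (w / 2)) (Real.sqrt_pos.mpr (by linarith))
      rw [Real.sq_sqrt (by linarith)] at h2
      linarith
    rw [h.phi_expand a t] at hle0
    nlinarith [hle0]
  · -- lower bound
    have hge : 0 ≤ phi Q ((a - C t) ^ 2) := h.phi_nonneg (h.qm.sq_mem _)
    rw [h.phi_expand a t] at hge
    nlinarith [hge]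

lemma phi_mul (a b : MvPolynomial (Fin n) ℝ) : phi Q (a * b) = phi Q a * phi Q b := by
  have key : a * b = C (1/4 : ℝ) * (a + b) ^ 2 + C (-(1/4) : ℝ) * (a - b) ^ 2 := by
    rw [map_neg]
    linear_combination (-(a * b)) * (cquarter (n := n))
  have hsub : phi Q (a - b) = phi Q a - phi Q b := by
    rw [sub_eq_add_neg, h.phi_add, h.phi_neg]
    ring
  rw [key, h.phi_add, h.phi_cmul', h.phi_cmul', h.phi_sq, h.phi_sq, h.phi_add, hsub]
  ring

lemma eval_phi (a : MvPolynomial (Fin n) ℝ) :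
    eval (fun i => phi Q (X i)) a = phi Q a := by
  induction a using MvPolynomial.induction_on with
  | C r => simp [h.phi_const]
  | add p q hp hq => rw [map_add, hp, hq, h.phi_add]
  | mul_X p i hp => rw [map_mul, eval_X, hp, h.phi_mul]

end GoodQM

lemma isSumSq_one : IsSumSq (1 : MvPolynomial (Fin n) ℝ) := by
  have : (1 : MvPolynomial (Fin n) ℝ) = 1 * 1 + 0 := by ring
  rw [this]
  exact IsSumSq.sq_add 1 IsSumSq.zero

lemma exists_goodQM {Q1 : Set (MvPolynomial (Fin n) ℝ)} (hQ1 : IsQM Q1)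
    (hproper : C (-1) ∉ Q1) {N : ℝ} (hN0 : 0 ≤ N)
    (hN : C N - ∑ i, (X i : MvPolynomial (Fin n) ℝ) ^ 2 ∈ Q1) :
    ∃ Q, Q1 ⊆ Q ∧ GoodQM Q := by
  set S : Set (Set (MvPolynomial (Fin n) ℝ)) := {Q | IsQM Q ∧ Q1 ⊆ Q ∧ C (-1) ∉ Q} with hS
  have hchain : ∀ c ⊆ S, IsChain (· ⊆ ·) c → c.Nonempty →
      ∃ ub ∈ S, ∀ q ∈ c, q ⊆ ub := by
    intro c hcS hc ⟨Q0, hQ0⟩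
    refine ⟨⋃₀ c, ⟨?_, ?_, ?_⟩, fun q hq => Set.subset_sUnion_of_mem hq⟩
    · refine ⟨Set.mem_sUnion.2 ⟨Q0, hQ0, (hcS hQ0).1.zero_mem⟩,
        Set.mem_sUnion.2 ⟨Q0, hQ0, (hcS hQ0).1.one_mem⟩, ?_, ?_⟩
      · rintro a ⟨q1, hq1, ha⟩ b ⟨q2, hq2, hb⟩
        rcases eq_or_ne q1 q2 with rfl | hne
        · exact Set.mem_sUnion.2 ⟨q1, hq1, (hcS hq1).1.add_mem ha hb⟩
        · rcases hc hq1 hq2 hne with hle | hle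
          · exact Set.mem_sUnion.2 ⟨q2, hq2, (hcS hq2).1.add_mem (hle ha) hb⟩
          · exact Set.mem_sUnion.2 ⟨q1, hq1, (hcS hq1).1.add_mem ha (hle hb)⟩
      · rintro w a ⟨q1, hq1, ha⟩
        exact Set.mem_sUnion.2 ⟨q1, hq1, (hcS hq1).1.sq_mul_mem w ha⟩
    · exact fun a ha => Set.mem_sUnion.2 ⟨Q0, hQ0, (hcS hQ0).2.1 ha⟩
    · rintro ⟨q1, hq1, hmem⟩
      exact (hcS hq1).2.2 hmem
  obtain ⟨M, hsub, hmax⟩ := zorn_subset_nonempty S hchain Q1 ⟨hQ1, subset_rfl, hproper⟩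
  obtain ⟨hM, hMQ1, hMproper⟩ := hmax.prop
  have htotal : ∀ b, b ∈ M ∨ -b ∈ M := by
    refine total_of_maximal hM hMproper fun b hb => ?_
    by_contra hne
    have hmemS : qmExt M b ∈ S := ⟨qmExt_isQM hM b, hMQ1.trans (subset_qmExt b), hne⟩
    have hle : qmExt M b ⊆ M := hmax.2 hmemS (subset_qmExt b)
    exact hb (hle (mem_qmExt_self hM b))
  exact ⟨M, hsub, hM, hMproper, htotal, bd_univ hM hN0 (hMQ1 hN)⟩

/-- The quadratic module generated by `g`. -/
def qmod {s : ℕ} (g : Fin s → MvPolynomial (Fin n) ℝ) : Set (MvPolynomial (Fin n) ℝ) :=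
  {a | ∃ (s0 : MvPolynomial (Fin n) ℝ) (sv : Fin s → MvPolynomial (Fin n) ℝ),
    IsSumSq s0 ∧ (∀ i, IsSumSq (sv i)) ∧ a = s0 + ∑ i, sv i * g i}

lemma qmod_isQM {s : ℕ} (g : Fin s → MvPolynomial (Fin n) ℝ) : IsQM (qmod g) := by
  refine ⟨⟨0, 0, IsSumSq.zero, fun i => IsSumSq.zero, by simp⟩,
    ⟨1, 0, isSumSq_one, fun i => IsSumSq.zero, by simp⟩, ?_, ?_⟩
  · rintro a ⟨s0, sv, hs0, hsv, rfl⟩ b ⟨t0, tv, ht0, htv, rfl⟩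
    refine ⟨s0 + t0, fun i => sv i + tv i, hs0.add ht0, fun i => (hsv i).add (htv i), ?_⟩
    rw [Finset.sum_congr rfl (fun i _ => add_mul (sv i) (tv i) (g i)), Finset.sum_add_distrib]
    ring
  · rintro w a ⟨s0, sv, hs0, hsv, rfl⟩
    refine ⟨w ^ 2 * s0, fun i => w ^ 2 * sv i, ?_, fun i => ?_, ?_⟩
    · rw [show w ^ 2 * s0 = w * w * s0 by ring]; exact sq_mul_sumsq hs0
    · dsimp only
      rw [show w ^ 2 * sv i = w * w * sv i by ring]; exact sq_mul_sumsq (hsv i)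
    · rw [mul_add, Finset.mul_sum]
      congr 1
      exact Finset.sum_congr rfl fun i _ => by ring

lemma g_mem_qmod {s : ℕ} (g : Fin s → MvPolynomial (Fin n) ℝ) (i : Fin s) :
    g i ∈ qmod g := by
  refine ⟨0, fun j => if j = i then 1 else 0, IsSumSq.zero, fun j => ?_, ?_⟩
  · dsimp only
    split
    · exact isSumSq_one
    · exact IsSumSq.zero
  · simp [Finset.sum_ite_eq']

lemma qmod_eval_nonneg {s : ℕ} {g : Fin s → MvPolynomial (Fin n) ℝ}
    {a : MvPolynomial (Fin n) ℝ} (ha : a ∈ qmod g) (x : Fin n → ℝ)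
    (hx : ∀ i, 0 ≤ eval x (g i)) : 0 ≤ eval x a := by
  obtain ⟨s0, sv, hs0, hsv, rfl⟩ := ha
  rw [map_add, map_sum]
  have h1 : 0 ≤ eval x s0 := eval_sumsq_nonneg hs0 x
  have h2 : 0 ≤ ∑ i, eval x (sv i * g i) := by
    refine Finset.sum_nonneg fun i _ => ?_
    rw [map_mul]
    exact mul_nonneg (eval_sumsq_nonneg (hsv i) x) (hx i)
  linarith

end PutinarAux


open PutinarAux

/-- **Putinar's Positivstellensatz.** If the quadratic module generated by
`g 1, …, g s` is Archimedean and `p > 0` on `Ω = {x | g i x ≥ 0 ∀ i}`, then `p`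
lies in the quadratic module. -/
theorem putinar_positivstellensatz (n s : ℕ) (g : Fin s → MvPolynomial (Fin n) ℝ)
    (hArch : ∃ (N : ℕ) (σ0 : MvPolynomial (Fin n) ℝ) (σ : Fin s → MvPolynomial (Fin n) ℝ),
      IsSOS σ0 ∧ (∀ i, IsSOS (σ i)) ∧
      (N : MvPolynomial (Fin n) ℝ) - ∑ i, (X i) ^ 2 = σ0 + ∑ i, σ i * g i)
    (p : MvPolynomial (Fin n) ℝ)
    (hpos : ∀ x : Fin n → ℝ, (∀ i, 0 ≤ eval x (g i)) → 0 < eval x p) :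
    ∃ (s0 : MvPolynomial (Fin n) ℝ) (sv : Fin s → MvPolynomial (Fin n) ℝ),
      IsSOS s0 ∧ (∀ i, IsSOS (sv i)) ∧ p = s0 + ∑ i, sv i * g i := by
  classical
  obtain ⟨N, σ0, σv, hσ0, hσv, hid⟩ := hArch
  set T := qmod g with hTdef
  have hT : IsQM T := qmod_isQM g
  have hNT : C ((N : ℝ)) - ∑ i, (X i : MvPolynomial (Fin n) ℝ) ^ 2 ∈ T := by
    have hcast : (C ((N : ℝ)) : MvPolynomial (Fin n) ℝ) = (N : MvPolynomial (Fin n) ℝ) := by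
      rw [map_natCast]
    rw [hcast, hid]
    exact ⟨σ0, σv, (isSOS_iff_isSumSq σ0).mp hσ0,
      fun i => (isSOS_iff_isSumSq _).mp (hσv i), rfl⟩
  have harchT : ∀ a, a ∈ Bd T := bd_univ hT (by positivity) hNT
  have claim : ∀ ε : ℝ, 0 < ε → C (-1) ∈ qmExt T (C ε - p) ∨
      ∃ x : Fin n → ℝ, (∀ i, 0 ≤ eval x (g i)) ∧ eval x p ≤ ε := by
    intro ε hε
    by_cases hc : C (-1) ∈ qmExt T (C ε - p)
    · exact Or.inl hc
    · right
      obtain ⟨Q, hsub, hgood⟩ := exists_goodQM (qmExt_isQM hT _) hc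
        (by positivity : (0:ℝ) ≤ (N : ℝ)) (subset_qmExt _ hNT)
      refine ⟨fun i => phi Q (X i), fun i => ?_, ?_⟩
      · rw [hgood.eval_phi]
        exact hgood.phi_nonneg (hsub (subset_qmExt _ (g_mem_qmod g i)))
      · have hmem : C ε - p ∈ Q := hsub (mem_qmExt_self hT _)
        have h0 := hgood.phi_nonneg hmem
        have heq : phi Q (C ε - p) = ε - phi Q p := by
          rw [sub_eq_add_neg, hgood.phi_add, hgood.phi_const, hgood.phi_neg]; ring
        rw [heq] at h0
        rw [hgood.eval_phi]
        linarith
  have hfinal : ∃ ε : ℝ, 0 < ε ∧ C (-1) ∈ qmExt T (C ε - p) := by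
    set Ω : Set (Fin n → ℝ) := {x | ∀ i, 0 ≤ eval x (g i)} with hΩdef
    by_cases hΩ : Ω.Nonempty
    · have hclosed : IsClosed Ω := by
        have hrw : Ω = ⋂ i, (fun x => eval x (g i)) ⁻¹' (Set.Ici 0) := by
          ext x
          simp [hΩdef, Set.mem_iInter]
        rw [hrw]
        exact isClosed_iInter fun i => IsClosed.preimage (continuous_eval' (g i)) isClosed_Ici
      have hsubball : Ω ⊆ Metric.closedBall (0 : Fin n → ℝ) (Real.sqrt N) := by
        intro x hx
        have h1 : 0 ≤ eval x (C ((N : ℝ)) - ∑ i, (X i : MvPolynomial (Fin n) ℝ) ^ 2) :=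
          qmod_eval_nonneg hNT x hx
        simp only [map_sub, map_sum, map_pow, eval_C, eval_X] at h1
        rw [Metric.mem_closedBall, dist_zero_right,
          pi_norm_le_iff_of_nonneg (Real.sqrt_nonneg _)]
        intro i
        have h3 : (x i) ^ 2 ≤ (N : ℝ) := by
          have h5 : x i ^ 2 ≤ ∑ j, x j ^ 2 :=
            Finset.single_le_sum (f := fun j => (x j) ^ 2)
              (fun j _ => sq_nonneg (x j)) (Finset.mem_univ i)
          linarith
        have h4 : ‖x i‖ = Real.sqrt ((x i) ^ 2) := by
          rw [Real.sqrt_sq_eq_abs, Real.norm_eq_abs]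
        rw [h4]
        exact Real.sqrt_le_sqrt h3
      have hcomp : IsCompact Ω := (isCompact_closedBall _ _).of_isClosed_subset hclosed hsubball
      obtain ⟨x0, hx0, hmin⟩ := hcomp.exists_isMinOn hΩ (continuous_eval' p).continuousOn
      have hδ : 0 < eval x0 p := hpos x0 hx0
      refine ⟨eval x0 p / 2, by linarith, ?_⟩
      rcases claim (eval x0 p / 2) (by linarith) with h | ⟨x, hxΩ, hxp⟩
      · exact h
      · exfalso
        have hge : eval x0 p ≤ eval x p := hmin hxΩ
        linarith
    · refine ⟨1, one_pos, ?_⟩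
      rcases claim 1 one_pos with h | ⟨x, hxΩ, -⟩
      · exact h
      · exact absurd ⟨x, hxΩ⟩ hΩ
  obtain ⟨ε, hε, hm⟩ := hfinal
  obtain ⟨t, σ', ht, hσ', heq⟩ := hm
  have hC1 : (C (-1) : MvPolynomial (Fin n) ℝ) = -1 := by simp
  rw [hC1] at heq
  have hkey : σ' * (p - C ε) - 1 ∈ T := by
    have hrw : σ' * (p - C ε) - 1 = t := by linear_combination heq
    rw [hrw]
    exact ht
  have hpT : p ∈ T := by
    have hc := key_lemma hT harchT hσ' hkey
    have h2 : p = (p - C ε) + C ε := by ring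
    rw [h2]
    exact hT.add_mem hc (hT.const_mem (le_of_lt hε))
  obtain ⟨s0, sv, hs0, hsv, heq2⟩ := hpT
  exact ⟨s0, sv, (isSOS_iff_isSumSq s0).mpr hs0,
    fun i => (isSOS_iff_isSumSq _).mpr (hsv i), heq2⟩
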